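/- Let T > 0 and u ∈ H²₀((0,T),ℝ) with iterated primitives u₁, u₂, u₃ vanishing at 0, satisfying u₂(T) = 0 and u₃(T) = 0. Then ‖u₁‖⁴_{L²(0,T)} ≤ ‖u′‖²_{L²(0,T)} · ‖u₃‖²_{L²(0,T)}. -/

import Mathlib

open MeasureTheory intervalIntegral Set

/-- The iterated primitives of `u` vanishing at `0`. -/
noncomputable def iterPrim (u : ℝ → ℝ) : ℕ → ℝ → ℝ
  | 0 => u
  | n + 1 => fun t => ∫ s in (0:ℝ)..t, iterPrim u n s

/-- Cauchy–Schwarz for real integrals. -/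
lemma cs_integral {μ : Measure ℝ} {f g : ℝ → ℝ}
    (hf2 : Integrable (fun x => f x ^ 2) μ) (hg2 : Integrable (fun x => g x ^ 2) μ)
    (hfg : Integrable (fun x => f x * g x) μ) :
    (∫ x, f x * g x ∂μ) ^ 2 ≤ (∫ x, f x ^ 2 ∂μ) * ∫ x, g x ^ 2 ∂μ := by
  set A := ∫ x, f x ^ 2 ∂μ
  set B := ∫ x, f x * g x ∂μ
  set C := ∫ x, g x ^ 2 ∂μ
  have key : ∀ x : ℝ, 0 ≤ A * (x * x) + (2 * B) * x + C := by
    intro x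
    have h0 : 0 ≤ ∫ t, (x * f t + g t) ^ 2 ∂μ :=
      integral_nonneg fun t => sq_nonneg _
    have heq : (∫ t, (x * f t + g t) ^ 2 ∂μ) = A * (x * x) + (2 * B) * x + C := by
      have : (fun t => (x * f t + g t) ^ 2)
          = fun t => (x * x) * f t ^ 2 + ((2 * x) * (f t * g t) + g t ^ 2) := by
        funext t; ring
      have i1 : Integrable (fun t => (x * x) * f t ^ 2) μ := hf2.const_mul _
      have i2 : Integrable (fun t => (2 * x) * (f t * g t)) μ := hfg.const_mul _
      have i3 : Integrable (fun t => (2 * x) * (f t * g t) + g t ^ 2) μ := i2.add hg2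
      rw [this, integral_add i1 i3, integral_add i2 hg2,
        MeasureTheory.integral_const_mul, MeasureTheory.integral_const_mul]
      ring
    linarith [heq ▸ h0]
  have hd := discrim_le_zero key
  rw [discrim] at hd
  nlinarith [hd]

theorem quartic_interpolation
    (T : ℝ) (hT : 0 < T) (u u' : ℝ → ℝ)
    (hderiv : ∀ t, HasDerivAt u (u' t) t)
    (hu'L2 : MeasureTheory.MemLp u' 2 (MeasureTheory.volume.restrict (Set.Ioc 0 T)))
    (hu0 : u 0 = 0) (huT : u T = 0) (hu'0 : u' 0 = 0) (hu'T : u' T = 0)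
    (h2T : iterPrim u 2 T = 0) (h3T : iterPrim u 3 T = 0) :
    (∫ t in (0:ℝ)..T, (iterPrim u 1 t) ^ 2) ^ 2
      ≤ (∫ t in (0:ℝ)..T, (u' t) ^ 2) * ∫ t in (0:ℝ)..T, (iterPrim u 3 t) ^ 2 := by
  -- continuity of u and the iterated primitives
  have hcu : Continuous u := by
    rw [continuous_iff_continuousAt]; exact fun t => (hderiv t).continuousAt
  have hc0 : Continuous (iterPrim u 0) := hcu
  have hc1 : Continuous (iterPrim u 1) :=
    intervalIntegral.continuous_primitive (fun a b => hc0.intervalIntegrable a b) 0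
  have hc2 : Continuous (iterPrim u 2) :=
    intervalIntegral.continuous_primitive (fun a b => hc1.intervalIntegrable a b) 0
  have hc3 : Continuous (iterPrim u 3) :=
    intervalIntegral.continuous_primitive (fun a b => hc2.intervalIntegrable a b) 0
  -- derivatives of the iterated primitives
  have hd1 : ∀ t, HasDerivAt (iterPrim u 1) (iterPrim u 0 t) t :=
    fun t => (hc0.integral_hasStrictDerivAt 0 t).hasDerivAt
  have hd2 : ∀ t, HasDerivAt (iterPrim u 2) (iterPrim u 1 t) t :=
    fun t => (hc1.integral_hasStrictDerivAt 0 t).hasDerivAt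
  have hd3 : ∀ t, HasDerivAt (iterPrim u 3) (iterPrim u 2 t) t :=
    fun t => (hc2.integral_hasStrictDerivAt 0 t).hasDerivAt
  -- values at 0
  have h10 : iterPrim u 1 0 = 0 := integral_same
  have h20 : iterPrim u 2 0 = 0 := integral_same
  have h30 : iterPrim u 3 0 = 0 := integral_same
  -- integrability of u'
  haveI : IsFiniteMeasure (volume.restrict (Set.Ioc 0 T)) :=
    ⟨by simp [Measure.restrict_apply_univ]⟩
  have hu'int : IntegrableOn u' (Set.Ioc 0 T) volume :=
    hu'L2.integrable (by norm_num)
  have hu'ii : IntervalIntegrable u' volume 0 T :=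
    (intervalIntegrable_iff_integrableOn_Ioc_of_le hT.le).mpr hu'int
  -- first integration by parts : ∫ u₁ * u₁ = - ∫ u * u₂
  have ibp1 : (∫ t in (0:ℝ)..T, iterPrim u 1 t * iterPrim u 1 t)
      = - ∫ t in (0:ℝ)..T, u t * iterPrim u 2 t := by
    have := intervalIntegral.integral_mul_deriv_eq_deriv_mul
      (u := iterPrim u 1) (u' := u) (v := iterPrim u 2) (v' := iterPrim u 1)
      (a := 0) (b := T)
      (fun x _ => hd1 x) (fun x _ => hd2 x)
      (hcu.intervalIntegrable 0 T) (hc1.intervalIntegrable 0 T)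
    rw [this, h2T, h20]; ring
  -- second integration by parts : ∫ u * u₂ = - ∫ u' * u₃
  have ibp2 : (∫ t in (0:ℝ)..T, u t * iterPrim u 2 t)
      = - ∫ t in (0:ℝ)..T, u' t * iterPrim u 3 t := by
    have := intervalIntegral.integral_mul_deriv_eq_deriv_mul
      (u := u) (u' := u') (v := iterPrim u 3) (v' := iterPrim u 2)
      (a := 0) (b := T)
      (fun x _ => hderiv x) (fun x _ => hd3 x)
      hu'ii (hc2.intervalIntegrable 0 T)
    rw [this, huT, hu0]; ring
  have key : (∫ t in (0:ℝ)..T, (iterPrim u 1 t) ^ 2)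
      = ∫ t in (0:ℝ)..T, u' t * iterPrim u 3 t := by
    simp only [pow_two]
    rw [ibp1, ibp2, neg_neg]
  rw [key]
  -- pass to set integrals over Ioc 0 T
  rw [intervalIntegral.integral_of_le hT.le, intervalIntegral.integral_of_le hT.le,
    intervalIntegral.integral_of_le hT.le]
  -- integrability facts for Cauchy–Schwarz
  have hf2 : Integrable (fun x => u' x ^ 2) (volume.restrict (Set.Ioc 0 T)) :=
    hu'L2.integrable_sq
  have hg2 : Integrable (fun x => iterPrim u 3 x ^ 2) (volume.restrict (Set.Ioc 0 T)) :=
    ((hc3.pow 2).integrableOn_Ioc)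
  have hfg : Integrable (fun x => u' x * iterPrim u 3 x) (volume.restrict (Set.Ioc 0 T)) := by
    refine Integrable.mono' ((hf2.add hg2).div_const 2)
      (hu'L2.aestronglyMeasurable.mul hc3.aestronglyMeasurable) ?_
    filter_upwards with x
    rw [Real.norm_eq_abs, abs_mul]
    simp only [Pi.add_apply]
    nlinarith [sq_nonneg (|u' x| - |iterPrim u 3 x|), abs_nonneg (u' x),
      abs_nonneg (iterPrim u 3 x), sq_abs (u' x), sq_abs (iterPrim u 3 x)]
  exact cs_integral hf2 hg2 hfg
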